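/- Let α, β be nonnegative integers (representing α = 2m, β = 2n), and define Ψ(λ) = 2·[ ((α+β)/2 + 1)/(((α+β)/2 + 1)² + λ²) + (|α−β|/2)/((|α−β|/2)² + λ²) + 2·∑_{r=1}^{min(α,β)} ((|α−β|/2 + r)/((|α−β|/2 + r)² + λ²)) ] for λ ∈ ℝ, with the convention that a term with numerator 0 is 0. Then for every real p ≠ 0, (1/(2π)) ∫_{−∞}^{∞} e^{ipλ} Ψ(λ) dλ = 2·cosh(|p|/2)·exp(−|p|·(max(α,β)+1)/2)·sinh(|p|·(min(α,β)+1)/2)/sinh(|p|/2) − δ_{α,β}, where δ_{α,β} = 1 if α = β and 0 otherwise. -/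

import Mathlib

open MeasureTheory Real Complex Set Filter
open scoped FourierTransform

lemma cexp_integrableOn_Ioi (c : ℂ) (hc : c.re < 0) :
    IntegrableOn (fun x : ℝ => Complex.exp (c * x)) (Ioi 0) := by
  apply (integrable_norm_iff ?_).mp
  · have : (fun x : ℝ => ‖Complex.exp (c * x)‖) = fun x => Real.exp (-(-c.re) * x) := by
      ext x; simp [Complex.norm_exp]
    rw [this]
    exact exp_neg_integrableOn_Ioi 0 (by linarith)
  · exact (Complex.continuous_exp.comp (by fun_prop)).aestronglyMeasurable

lemma cexp_Ioi (c : ℂ) (hc : c.re < 0) :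
    ∫ x : ℝ in Ioi 0, Complex.exp (c * x) = -1 / c := by
  have hc0 : c ≠ 0 := fun h => by simp [h] at hc
  have h := integral_Ioi_of_hasDerivAt_of_tendsto
    (f := fun x : ℝ => Complex.exp (c * x) / c) (f' := fun x : ℝ => Complex.exp (c * x))
    (a := 0) (m := 0) ?_ ?_ (cexp_integrableOn_Ioi c hc) ?_
  · rw [h]; simp [hc0]; rw [neg_div, one_div]
  · exact (Continuous.continuousWithinAt (by fun_prop))
  · intro x hx
    have h1 : HasDerivAt (fun x : ℝ => c * (x:ℂ)) c x := by
      simpa using (Complex.ofRealCLM.hasDerivAt (x := x)).const_mul c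
    have := (h1.cexp).div_const c
    simpa [mul_comm, mul_div_assoc, mul_div_cancel_left₀ _ hc0] using this
  · rw [tendsto_zero_iff_norm_tendsto_zero]
    have : (fun x : ℝ => ‖Complex.exp (c * x) / c‖)
        = fun x => Real.exp (c.re * x) / ‖c‖ := by
      ext x; simp [Complex.norm_exp]
    rw [this]
    have h2 : Tendsto (fun x : ℝ => c.re * x) atTop atBot :=
      tendsto_id.const_mul_atTop_of_neg hc
    simpa using (tendsto_exp_atBot.comp h2).div_const ‖c‖

lemma integrable_exp_neg_abs (a : ℝ) (ha : 0 < a) :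
    Integrable (fun x : ℝ => Real.exp (-a * |x|)) := by
  set f := fun x : ℝ => Real.exp (-a * |x|) with hf
  have h1 : IntegrableOn f (Ici 0) := by
    rw [integrableOn_Ici_iff_integrableOn_Ioi]
    apply (exp_neg_integrableOn_Ioi 0 ha).congr_fun ?_ measurableSet_Ioi
    intro x hx; show Real.exp (-a * x) = f x
    rw [hf]; simp only; rw [abs_of_pos hx]
  have h2 : IntegrableOn f (Iic 0) := by
    apply (integrable_indicator_iff measurableSet_Iic).mp
    have h3 := ((integrable_indicator_iff measurableSet_Ici).mpr h1).comp_neg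
    apply h3.congr
    filter_upwards with x
    by_cases hx : x ≤ 0
    · rw [Set.indicator_of_mem (by simpa using hx), Set.indicator_of_mem (by simpa using hx)]
      simp [f]
    · rw [Set.indicator_of_notMem (by simpa using hx), Set.indicator_of_notMem (by simpa using hx)]
  have := h2.union (h1.mono_set Ioi_subset_Ici_self)
  rw [Iic_union_Ioi] at this
  exact integrableOn_univ.mp this

lemma integrable_cauchy (a : ℝ) (ha : 0 < a) :
    Integrable (fun lam : ℝ => a / (a ^ 2 + lam ^ 2)) := by
  have h := (integrable_inv_one_add_sq.comp_div (R := a) ha.ne').const_mul (1 / a)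
  apply h.congr
  filter_upwards with x
  have h2 : a ^ 2 + x ^ 2 > 0 := by positivity
  field_simp

open scoped FourierTransform in
lemma fourier_exp_abs (a : ℝ) (ha : 0 < a) (ξ : ℝ) :
    𝓕 (fun x : ℝ => (Real.exp (-a * |x|) : ℂ)) ξ = ((2 * a / (a ^ 2 + (2 * π * ξ) ^ 2) : ℝ) : ℂ) := by
  set b : ℝ := 2 * π * ξ with hb
  set F : ℝ → ℂ := fun v => Complex.exp (((-(b * v) : ℝ) : ℂ) * Complex.I) * (Real.exp (-a * |v|) : ℂ) with hF
  have hFeq : 𝓕 (fun x : ℝ => (Real.exp (-a * |x|) : ℂ)) ξ = ∫ v : ℝ, F v := by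
    rw [Real.fourier_real_eq]
    congr 1; funext v
    rw [Circle.smul_def, Real.fourierChar_apply, smul_eq_mul]
    congr 2
    all_goals (rw [hb]; push_cast; ring)
  have hFint : Integrable F := by
    apply ((integrable_exp_neg_abs a ha).ofReal).bdd_mul (c := 1)
    · exact (Complex.continuous_exp.comp (by fun_prop)).aestronglyMeasurable
    · refine Filter.Eventually.of_forall (fun v => ?_)
      rw [Complex.norm_exp]
      simp
  have hIoi : ∫ v in Ioi (0:ℝ), F v = -1 / (-(a:ℂ) - b * Complex.I) := by
    rw [← cexp_Ioi (-(a:ℂ) - b * Complex.I) (by simp [ha])]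
    apply setIntegral_congr_fun measurableSet_Ioi
    intro v hv
    rw [hF]; simp only
    rw [abs_of_pos hv, Complex.ofReal_exp, ← Complex.exp_add]
    congr 1
    rw [hb]; push_cast; ring
  have hIic : ∫ v in Iic (0:ℝ), F v = -1 / (-(a:ℂ) + b * Complex.I) := by
    have h0 : (Iic (0:ℝ)) = Iic (-0 : ℝ) := by norm_num
    rw [h0, ← integral_comp_neg_Ioi, ← cexp_Ioi (-(a:ℂ) + b * Complex.I) (by simp [ha])]
    apply setIntegral_congr_fun measurableSet_Ioi
    intro v hv
    rw [hF]; simp only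
    rw [abs_neg, abs_of_pos hv, Complex.ofReal_exp, ← Complex.exp_add]
    congr 1
    rw [hb]; push_cast; ring
  rw [hFeq, ← intervalIntegral.integral_Iic_add_Ioi (hFint.integrableOn) (hFint.integrableOn), hIoi, hIic]
  have h1 : (-(a:ℂ) + b * Complex.I) ≠ 0 := by
    intro h
    have := congrArg Complex.re h
    simp at this; linarith
  have h2 : (-(a:ℂ) - b * Complex.I) ≠ 0 := by
    intro h
    have := congrArg Complex.re h
    simp at this; linarith
  have h3 : ((a ^ 2 + b ^ 2 : ℝ) : ℂ) ≠ 0 := by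
    have : (0:ℝ) < a ^ 2 + b ^ 2 := by positivity
    exact_mod_cast ne_of_gt (by exact_mod_cast this)
  push_cast at h3 ⊢
  rw [div_add_div _ _ h1 h2, div_eq_div_iff (mul_ne_zero h1 h2) h3]
  ring_nf
  simp [Complex.I_sq]
  try ring

open scoped FourierTransform in
lemma cauchy_fourier (a : ℝ) (ha : 0 < a) (x : ℝ) :
    ∫ lam : ℝ, Complex.exp (Complex.I * (x : ℂ) * (lam : ℂ)) * ((a / (a ^ 2 + lam ^ 2) : ℝ) : ℂ)
      = (π : ℂ) * (Real.exp (-a * |x|) : ℂ) := by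
  set f : ℝ → ℂ := fun x => (Real.exp (-a * |x|) : ℂ) with hf
  have hfi : Integrable f := (integrable_exp_neg_abs a ha).ofReal
  have hFf : 𝓕 f = fun ξ => ((2 * a / (a ^ 2 + (2 * π * ξ) ^ 2) : ℝ) : ℂ) := by
    funext ξ; exact fourier_exp_abs a ha ξ
  have hFfi : Integrable (𝓕 f) := by
    rw [hFf]
    apply Integrable.ofReal
    have h := (integrable_cauchy (a / (2 * π)) (by positivity)).const_mul (1 / π)
    apply h.congr
    filter_upwards with ξ
    have hπ : (0:ℝ) < π := Real.pi_pos
    have h2 : a ^ 2 + (2 * π * ξ) ^ 2 > 0 := by positivity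
    have h3 : (a / (2 * π)) ^ 2 + ξ ^ 2 > 0 := by positivity
    show 1 / π * (a / (2 * π) / ((a / (2 * π)) ^ 2 + ξ ^ 2))
        = 2 * a / (a ^ 2 + (2 * π * ξ) ^ 2)
    have h4 : 1 / π * (a / (2 * π) / ((a / (2 * π)) ^ 2 + ξ ^ 2))
        = (a / (2 * π ^ 2)) / ((a / (2 * π)) ^ 2 + ξ ^ 2) := by ring
    rw [h4, div_eq_div_iff h3.ne' h2.ne']
    field_simp
  have hinv := hfi.fourierInv_fourier_eq hFfi
    (v := x) (Continuous.continuousAt (by fun_prop))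
  rw [Real.fourierInv_eq_fourier_neg,
    Real.fourier_real_eq_integral_exp_smul, hFf] at hinv
  -- hinv : ∫ v, cexp(↑(-2π v (-x)) I) • (...) = f x
  set g : ℝ → ℂ := fun lam =>
    Complex.exp (Complex.I * (x : ℂ) * (lam : ℂ)) * ((2 * a / (a ^ 2 + lam ^ 2) : ℝ) : ℂ) with hg
  have hcomp : (∫ v : ℝ, g (2 * π * v)) = f x := by
    rw [← hinv]
    congr 1; funext v
    rw [hg]; simp only [smul_eq_mul]
    congr 2
    · push_cast; ring
  rw [MeasureTheory.Measure.integral_comp_mul_left g (2 * π)] at hcomp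
  have h2π : |(2 * π)⁻¹| = (2 * π)⁻¹ := abs_of_pos (by positivity)
  rw [h2π] at hcomp
  have hgi : (∫ lam : ℝ, g lam) = (2 * π : ℝ) • f x := by
    rw [← hcomp, smul_smul]
    rw [mul_inv_cancel₀ (by positivity), one_smul]
  have hsplit : (∫ lam : ℝ, g lam) = 2 * ∫ lam : ℝ,
      Complex.exp (Complex.I * (x : ℂ) * (lam : ℂ)) * ((a / (a ^ 2 + lam ^ 2) : ℝ) : ℂ) := by
    rw [← MeasureTheory.integral_const_mul]
    congr 1; funext lam
    rw [hg]; push_cast; ring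
  rw [hsplit] at hgi
  have := hgi
  field_simp at this ⊢
  rw [hf] at this
  simp only at this
  push_cast [Complex.real_smul] at this ⊢
  simp only [neg_mul] at this ⊢
  linear_combination this / 2


lemma key_id (m k : ℕ) (t : ℝ) (ht : 0 < t) :
    Real.exp (-((2 * (m:ℝ) + k) / 2 + 1) * t)
      + (if k = 0 then 0 else 1) * Real.exp (-((k:ℝ) / 2) * t)
      + 2 * ∑ r ∈ Finset.Icc 1 m, Real.exp (-((k:ℝ) / 2 + r) * t)
    = 2 * Real.cosh (t / 2) * Real.exp (-(t * ((m:ℝ) + (k:ℝ) + 1) / 2))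
        * Real.sinh (t * ((m:ℝ) + 1) / 2) / Real.sinh (t / 2)
      - (if k = 0 then 1 else 0) := by
  set y := Real.exp (-(t / 2)) with hy
  have hy0 : 0 < y := Real.exp_pos _
  have hy1 : y < 1 := by
    rw [hy, Real.exp_lt_one_iff]; linarith
  have hEy : Real.exp (t / 2) = y⁻¹ := by
    rw [hy, ← Real.exp_neg, neg_neg]
  have e1 : Real.exp (-((2 * (m:ℝ) + k) / 2 + 1) * t) = y ^ (2 * m + k + 2) := by
    rw [hy, ← Real.exp_nat_mul]; congr 1; push_cast; ring
  have e2 : Real.exp (-((k:ℝ) / 2) * t) = y ^ k := by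
    rw [hy, ← Real.exp_nat_mul]; congr 1; push_cast; ring
  have e3 : ∀ r : ℕ, Real.exp (-((k:ℝ) / 2 + r) * t) = y ^ (k + 2 * r) := by
    intro r
    rw [hy, ← Real.exp_nat_mul]; congr 1; push_cast; ring
  have e4 : Real.exp (-(t * ((m:ℝ) + (k:ℝ) + 1) / 2)) = y ^ (m + k + 1) := by
    rw [hy, ← Real.exp_nat_mul]; congr 1; push_cast; ring
  have e5 : Real.cosh (t / 2) = (y⁻¹ + y) / 2 := by
    rw [Real.cosh_eq, hEy, hy]
  have e6 : Real.sinh (t / 2) = (y⁻¹ - y) / 2 := by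
    rw [Real.sinh_eq, hEy, hy]
  have e7 : Real.sinh (t * ((m:ℝ) + 1) / 2) = ((y⁻¹) ^ (m + 1) - y ^ (m + 1)) / 2 := by
    rw [Real.sinh_eq]
    congr 2
    · rw [← hEy, ← Real.exp_nat_mul]; congr 1; push_cast; ring
    · rw [hy, ← Real.exp_nat_mul]; congr 1; push_cast; ring
  have hz1 : y ^ 2 ≠ 1 := by nlinarith
  have hsum : ∑ r ∈ Finset.Icc 1 m, y ^ (k + 2 * r)
      = y ^ k * (((y ^ 2) ^ (m + 1) - 1) / (y ^ 2 - 1) - 1) := by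
    have h1 : ∀ r : ℕ, y ^ (k + 2 * r) = y ^ k * (y ^ 2) ^ r := by
      intro r; rw [pow_add, pow_mul]
    simp_rw [h1, ← Finset.mul_sum]
    congr 1
    have h2 : Finset.Icc 1 m = Finset.Ico 1 (m + 1) := by
      rw [Finset.Ico_add_one_right_eq_Icc]
    rw [h2, Finset.sum_Ico_eq_sub _ (Nat.le_add_left 1 m), geom_sum_eq hz1]
    simp
  have hsne : Real.sinh (t / 2) ≠ 0 := by
    rw [e6]
    have h : 1 < y⁻¹ := (one_lt_inv₀ hy0).mpr hy1
    have : 0 < y⁻¹ - y := by linarith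
    positivity
  rw [e1, e2, e4, e5, e7]
  simp_rw [e3]
  rw [hsum]
  have hd1 : y ^ 2 - 1 ≠ 0 := sub_ne_zero.mpr hz1
  rw [eq_sub_iff_add_eq, eq_div_iff hsne, e6]
  by_cases hk : k = 0
  · subst hk
    simp only [if_pos rfl, inv_pow, ↓reduceIte]
    field_simp
    ring
  · simp only [if_neg hk, inv_pow]
    field_simp
    ring


theorem stmt_17 (α β : ℕ) (p : ℝ) (hp : p ≠ 0) :
    ((1 / (2 * Real.pi) : ℝ) : ℂ) *
        ∫ lam : ℝ, Complex.exp (Complex.I * (p : ℂ) * (lam : ℂ)) *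
          (((2 * ((((α : ℝ) + (β : ℝ)) / 2 + 1) /
                ((((α : ℝ) + (β : ℝ)) / 2 + 1) ^ 2 + lam ^ 2) +
              (|(α : ℝ) - (β : ℝ)| / 2) / ((|(α : ℝ) - (β : ℝ)| / 2) ^ 2 + lam ^ 2) +
              2 * ∑ r ∈ Finset.Icc 1 (min α β),
                (|(α : ℝ) - (β : ℝ)| / 2 + (r : ℝ)) /
                  ((|(α : ℝ) - (β : ℝ)| / 2 + (r : ℝ)) ^ 2 + lam ^ 2)) : ℝ)) : ℂ) =
      ((2 * Real.cosh (|p| / 2) *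
            Real.exp (-(|p| * ((max α β : ℕ) + 1 : ℝ) / 2)) *
            Real.sinh (|p| * ((min α β : ℕ) + 1 : ℝ) / 2) / Real.sinh (|p| / 2) -
          (if α = β then 1 else 0) : ℝ) : ℂ) := by
  set m := min α β with hm
  set M := max α β with hM
  have hmM : m ≤ M := min_le_max
  set t := |p| with htdef
  have ht : 0 < t := abs_pos.mpr hp
  set c : ℝ := ((α : ℝ) + (β : ℝ)) / 2 + 1 with hc
  set d : ℝ := |(α : ℝ) - (β : ℝ)| / 2 with hd
  set T : ℝ → ℝ → ℂ :=
    fun a lam => Complex.exp (Complex.I * (p : ℂ) * (lam : ℂ)) * ((a / (a ^ 2 + lam ^ 2) : ℝ) : ℂ)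
    with hT
  have hAd : |(α : ℝ) - (β : ℝ)| = (M : ℝ) - (m : ℝ) := by
    rcases le_total α β with h | h
    · have h' : (α : ℝ) ≤ β := Nat.cast_le.mpr h
      rw [_root_.abs_of_nonpos (by linarith), hM, hm, max_eq_right h, min_eq_left h]; ring
    · have h' : (β : ℝ) ≤ α := Nat.cast_le.mpr h
      rw [_root_.abs_of_nonneg (by linarith), hM, hm, max_eq_left h, min_eq_right h]
  have hαβ : (α : ℝ) + (β : ℝ) = (M : ℝ) + (m : ℝ) := by
    rw [hM, hm]
    rcases le_total α β with h | h
    · rw [max_eq_right h, min_eq_left h]; ring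
    · rw [max_eq_left h, min_eq_right h]
  have hcpos : 0 < c := by
    rw [hc]; positivity
  have hdnn : 0 ≤ d := by rw [hd]; positivity
  have hbdd : ∀ lam : ℝ, ‖Complex.exp (Complex.I * (p : ℂ) * (lam : ℂ))‖ ≤ 1 := by
    intro lam
    rw [Complex.norm_exp]
    simp [Complex.mul_re]
  have hmeas : AEStronglyMeasurable
      (fun lam : ℝ => Complex.exp (Complex.I * (p : ℂ) * (lam : ℂ))) volume :=
    (Complex.continuous_exp.comp (by fun_prop)).aestronglyMeasurable
  have hTint : ∀ a : ℝ, 0 ≤ a → Integrable (T a) := by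
    intro a ha
    rcases eq_or_lt_of_le ha with h | h
    · have : T a = fun _ => 0 := by
        funext lam; rw [hT]; simp [← h]
      rw [this]; exact integrable_zero _ _ _
    · exact ((integrable_cauchy a h).ofReal).bdd_mul hmeas (c := 1) (Filter.Eventually.of_forall hbdd)
  have hTval : ∀ a : ℝ, 0 < a → ∫ lam : ℝ, T a lam = (π : ℂ) * (Real.exp (-a * t) : ℂ) := by
    intro a ha
    rw [htdef, hT]
    exact cauchy_fourier a ha p
  have hG : ∀ lam : ℝ,
      Complex.exp (Complex.I * (p : ℂ) * (lam : ℂ)) *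
        (((2 * (c / (c ^ 2 + lam ^ 2) + d / (d ^ 2 + lam ^ 2) +
            2 * ∑ r ∈ Finset.Icc 1 m, (d + (r : ℝ)) / ((d + (r : ℝ)) ^ 2 + lam ^ 2)) : ℝ)) : ℂ)
      = 2 * T c lam + 2 * T d lam + 4 * ∑ r ∈ Finset.Icc 1 m, T (d + (r : ℝ)) lam := by
    intro lam
    rw [hT]
    simp only
    rw [← Finset.mul_sum]
    push_cast
    ring
  rw [integral_congr_ae (Filter.Eventually.of_forall hG)]
  have hint_c : Integrable (T c) := hTint c hcpos.le
  have hint_d : Integrable (T d) := hTint d hdnn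
  have hint_r : ∀ r ∈ Finset.Icc 1 m, Integrable (T (d + (r : ℝ))) := by
    intro r hr
    have hr1 : 1 ≤ r := (Finset.mem_Icc.mp hr).1
    apply hTint
    have : (1:ℝ) ≤ r := by exact_mod_cast hr1
    linarith
  have hint_S : Integrable (fun lam : ℝ => ∑ r ∈ Finset.Icc 1 m, T (d + (r : ℝ)) lam) :=
    integrable_finset_sum _ fun r hr => hint_r r hr
  have h12 : Integrable (fun lam : ℝ => 2 * T c lam + 2 * T d lam) :=
    (hint_c.const_mul 2).add (hint_d.const_mul 2)
  rw [integral_add h12 (hint_S.const_mul 4),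
    integral_add (hint_c.const_mul 2) (hint_d.const_mul 2),
    MeasureTheory.integral_const_mul, MeasureTheory.integral_const_mul, MeasureTheory.integral_const_mul,
    integral_finset_sum _ hint_r]
  rw [hTval c hcpos]
  have hVd : ∫ lam : ℝ, T d lam
      = if α = β then 0 else (π : ℂ) * (Real.exp (-d * t) : ℂ) := by
    by_cases hab : α = β
    · rw [if_pos hab]
      have : T d = fun _ => 0 := by
        funext lam; rw [hT]; simp only
        have : d = 0 := by rw [hd, hab]; simp
        rw [this]; simp
      rw [this]; exact integral_zero _ _
    · rw [if_neg hab]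
      apply hTval
      rw [hd]
      have : (α : ℝ) ≠ (β : ℝ) := by exact_mod_cast hab
      have : |(α : ℝ) - (β : ℝ)| > 0 := abs_pos.mpr (sub_ne_zero.mpr this)
      linarith
  rw [hVd]
  have hTvr : ∀ r ∈ Finset.Icc 1 m, ∫ lam : ℝ, T (d + (r : ℝ)) lam
      = (π : ℂ) * (Real.exp (-(d + (r : ℝ)) * t) : ℂ) := by
    intro r hr
    apply hTval
    have hr1 : 1 ≤ r := (Finset.mem_Icc.mp hr).1
    have : (1:ℝ) ≤ r := by exact_mod_cast hr1
    linarith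
  rw [Finset.sum_congr rfl hTvr]
  -- now reduce to a real identity
  have hite : (if α = β then (0:ℂ) else (π : ℂ) * (Real.exp (-d * t) : ℂ))
      = (((if α = β then (0:ℝ) else π * Real.exp (-d * t)) : ℝ) : ℂ) := by
    split <;> push_cast <;> ring
  rw [hite]
  have key : (1 / (2 * π)) * (2 * (π * Real.exp (-c * t))
      + 2 * (if α = β then (0:ℝ) else π * Real.exp (-d * t))
      + 4 * ∑ r ∈ Finset.Icc 1 m, π * Real.exp (-(d + (r : ℝ)) * t))
      = 2 * Real.cosh (t / 2) * Real.exp (-(t * ((M : ℝ) + 1) / 2)) *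
          Real.sinh (t * ((m : ℝ) + 1) / 2) / Real.sinh (t / 2) -
        (if α = β then 1 else 0) := by
    have hkid := key_id m (M - m) t ht
    have hcast : ((M - m : ℕ) : ℝ) = (M : ℝ) - (m : ℝ) := Nat.cast_sub hmM
    have hiff : (α = β) ↔ (M - m = 0) := by
      simp only [hM, hm]
      omega
    rw [hcast] at hkid
    have e1 : -c * t = -((2 * (m:ℝ) + ((M:ℝ) - m)) / 2 + 1) * t := by
      rw [hc, hαβ]; ring
    have e2 : -d * t = -(((M:ℝ) - m) / 2) * t := by
      rw [hd, hAd]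
    have e3 : ∀ r : ℕ, -(d + (r:ℝ)) * t = -(((M:ℝ) - m) / 2 + r) * t := by
      intro r; rw [hd, hAd]
    have e4 : -(t * ((M:ℝ) + 1) / 2) = -(t * ((m:ℝ) + ((M:ℝ) - m) + 1) / 2) := by ring
    have hV : (if α = β then (0:ℝ) else π * Real.exp (-d * t))
        = π * ((if α = β then (0:ℝ) else 1) * Real.exp (-d * t)) := by
      split <;> ring
    rw [hV, ← Finset.mul_sum]
    have collect : ∀ E1 E2 S : ℝ, 2 * (π * E1) + 2 * (π * E2) + 4 * (π * S)
        = (2 * π) * (E1 + E2 + 2 * S) := by intros; ring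
    rw [collect, ← mul_assoc, one_div_mul_cancel (by positivity : 2 * π ≠ 0), one_mul]
    rw [e1, e2, e4]
    simp_rw [e3]
    rw [if_congr hiff rfl rfl, if_congr hiff rfl rfl]
    exact hkid
  rw [← key]
  push_cast
  ring
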